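/- Let φ: ℝ → ℝ≥0 be even and differentiable, a > 0, with Φ(t) := (a/2)t² - φ(t) convex and limsup_{t→∞} φ(t)/t² < a/2. Then for each s ∈ ℝ, the infimum inf_t {(1/2)(√a t - s/√a)² - φ(t)} is attained, and the minimizing pair satisfies s = a t - φ'(t); moreover φ(t) + φ^c(s(t)) = (1/2)(√a t - s(t)/√a)² with s(t) = a t - φ'(t). -/

import Mathlib

open Filter Set

private lemma hq_hasDerivAt (φ : ℝ → ℝ) (a : ℝ) (hdiff : Differentiable ℝ φ) (x : ℝ) :
    HasDerivAt (fun t => a / 2 * t ^ 2 - φ t) (a * x - deriv φ x) x := by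
  have h1 : HasDerivAt (fun t : ℝ => a / 2 * t ^ 2) (a * x) x := by
    have := (hasDerivAt_pow 2 x).const_mul (a / 2)
    exact this.congr_deriv (by push_cast; ring)
  exact h1.sub (hdiff x).hasDerivAt

private lemma hq_grad_ineq (φ : ℝ → ℝ) (a : ℝ) (hdiff : Differentiable ℝ φ)
    (hconv : ConvexOn ℝ Set.univ (fun t => a / 2 * t ^ 2 - φ t)) (t t' : ℝ) :
    a / 2 * t ^ 2 - φ t + (a * t - deriv φ t) * (t' - t) ≤ a / 2 * t' ^ 2 - φ t' := by
  have hd := hq_hasDerivAt φ a hdiff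
  rcases lt_trichotomy t t' with h | h | h
  · have := hconv.le_slope_of_hasDerivAt (mem_univ t) (mem_univ t') h (hd t)
    rw [slope_def_field] at this
    have ht : 0 < t' - t := by linarith
    rw [le_div_iff₀ ht] at this
    nlinarith
  · subst h; simp
  · have := hconv.slope_le_of_hasDerivAt (mem_univ t') (mem_univ t) h (hd t)
    rw [slope_def_field] at this
    have ht : 0 < t - t' := by linarith
    rw [div_le_iff₀ ht] at this
    nlinarith

private lemma hq_deriv_zero (φ : ℝ → ℝ) (hdiff : Differentiable ℝ φ)
    (heven : ∀ t, φ (-t) = φ t) : deriv φ 0 = 0 := by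
  have h1 : HasDerivAt (fun x : ℝ => φ (-x)) (deriv φ 0 * (-1)) 0 := by
    have hneg : HasDerivAt (fun x : ℝ => -x) (-1) 0 := (hasDerivAt_id 0).neg
    have hphi : HasDerivAt φ (deriv φ 0) (-(0:ℝ)) := by
      rw [neg_zero]; exact (hdiff 0).hasDerivAt
    have := HasDerivAt.comp 0 hphi hneg
    simpa [Function.comp_def] using this
  have h2 : (fun x : ℝ => φ (-x)) = φ := funext heven
  rw [h2] at h1
  have := h1.unique (hdiff 0).hasDerivAt
  linarith

/-- coercivity at +∞ of `t ↦ a/2 t² - φ t - s t` -/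
private lemma hq_tendsto (φ : ℝ → ℝ) (a : ℝ) (ha : 0 < a) (hnn : ∀ t, 0 ≤ φ t)
    (heven : ∀ t, φ (-t) = φ t) (hdiff : Differentiable ℝ φ)
    (hconv : ConvexOn ℝ Set.univ (fun t => a / 2 * t ^ 2 - φ t))
    (hgrow : Filter.limsup (fun t => φ t / t ^ 2) Filter.atTop < a / 2) (s : ℝ) :
    Tendsto (fun t => a / 2 * t ^ 2 - φ t - s * t) atTop atTop := by
  obtain ⟨b, hb1, hb2⟩ := exists_between hgrow
  have hbound : ∀ x : ℝ, φ x ≤ a / 2 * x ^ 2 + φ 0 := by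
    intro x
    have := hq_grad_ineq φ a hdiff hconv 0 x
    rw [hq_deriv_zero φ hdiff heven] at this
    nlinarith
  have hbdd : IsBoundedUnder (· ≤ ·) atTop (fun t => φ t / t ^ 2) := by
    refine ⟨a / 2 + φ 0, eventually_map.2 ?_⟩
    filter_upwards [eventually_ge_atTop (1 : ℝ)] with t ht
    have ht2 : (1 : ℝ) ≤ t ^ 2 := by nlinarith
    have := hbound t
    have h0 := hnn 0
    rw [div_le_iff₀ (by positivity : (0:ℝ) < t ^ 2)]
    nlinarith
  have hev : ∀ᶠ t in atTop, φ t / t ^ 2 < b :=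
    eventually_lt_of_limsup_lt hb1 hbdd
  have hc : 0 < a / 2 - b := by linarith
  refine tendsto_atTop_mono' atTop ?_ tendsto_id
  filter_upwards [hev, eventually_ge_atTop (1 : ℝ),
    eventually_ge_atTop ((|s| + 1) / (a / 2 - b))] with t h1 h2 h3
  have ht2 : (0 : ℝ) < t ^ 2 := by positivity
  rw [div_lt_iff₀ ht2] at h1
  rw [div_le_iff₀ hc] at h3
  have hs1 : s ≤ |s| := le_abs_self s
  have hs2 : -s ≤ |s| := neg_le_abs s
  show t ≤ _
  nlinarith

private lemma hq_min (φ : ℝ → ℝ) (a : ℝ) (ha : 0 < a) (hnn : ∀ t, 0 ≤ φ t)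
    (heven : ∀ t, φ (-t) = φ t) (hdiff : Differentiable ℝ φ)
    (hconv : ConvexOn ℝ Set.univ (fun t => a / 2 * t ^ 2 - φ t))
    (hgrow : Filter.limsup (fun t => φ t / t ^ 2) Filter.atTop < a / 2) (s : ℝ) :
    ∃ t : ℝ, ∀ t' : ℝ, a / 2 * t ^ 2 - φ t - s * t ≤ a / 2 * t' ^ 2 - φ t' - s * t' := by
  set g : ℝ → ℝ := fun t => a / 2 * t ^ 2 - φ t - s * t with hg
  have hcont : Continuous g := by
    have := hdiff.continuous
    continuity
  have htop : Tendsto g atTop atTop := hq_tendsto φ a ha hnn heven hdiff hconv hgrow s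
  have hbot : Tendsto g atBot atTop := by
    have h2 : Tendsto (fun t => g (-t)) atTop atTop := by
      have := hq_tendsto φ a ha hnn heven hdiff hconv hgrow (-s)
      refine this.congr fun t => ?_
      simp only [hg, heven]
      ring
    exact (h2.comp tendsto_neg_atBot_atTop).congr fun t => by
      simp [Function.comp]
  have hcoc : Tendsto g (cocompact ℝ) atTop := by
    rw [cocompact_eq_atBot_atTop]
    exact tendsto_sup.2 ⟨hbot, htop⟩
  exact hcont.exists_forall_le hcoc

private lemma hq_expand (a : ℝ) (ha : 0 < a) (s x : ℝ) :
    (1 / 2) * (Real.sqrt a * x - s / Real.sqrt a) ^ 2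
      = a / 2 * x ^ 2 - s * x + s ^ 2 / (2 * a) := by
  have hu : Real.sqrt a ^ 2 = a := Real.sq_sqrt ha.le
  have hu0 : Real.sqrt a ≠ 0 := ne_of_gt (Real.sqrt_pos.2 ha)
  rw [← hu]
  field_simp
  rw [Real.sqrt_sq (Real.sqrt_nonneg a)]; ring

theorem stmt_5 (φ : ℝ → ℝ) (a : ℝ) (ha : 0 < a) (hnn : ∀ t, 0 ≤ φ t)
    (heven : ∀ t, φ (-t) = φ t) (hdiff : Differentiable ℝ φ)
    (hconv : ConvexOn ℝ Set.univ (fun t => a / 2 * t ^ 2 - φ t))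
    (hgrow : Filter.limsup (fun t => φ t / t ^ 2) Filter.atTop < a / 2) :
    (∀ s : ℝ, ∃ t : ℝ,
        (∀ t' : ℝ,
          (1 / 2) * (Real.sqrt a * t - s / Real.sqrt a) ^ 2 - φ t
            ≤ (1 / 2) * (Real.sqrt a * t' - s / Real.sqrt a) ^ 2 - φ t')
        ∧ s = a * t - deriv φ t) ∧
    ∀ t : ℝ,
      φ t + sInf {y : ℝ | ∃ t' : ℝ,
          y = (1 / 2) * (Real.sqrt a * t' - (a * t - deriv φ t) / Real.sqrt a) ^ 2 - φ t'}
        = (1 / 2) * (Real.sqrt a * t - (a * t - deriv φ t) / Real.sqrt a) ^ 2 := by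
  constructor
  · intro s
    obtain ⟨t, ht⟩ := hq_min φ a ha hnn heven hdiff hconv hgrow s
    refine ⟨t, fun t' => ?_, ?_⟩
    · have := ht t'
      rw [hq_expand a ha s t, hq_expand a ha s t']
      linarith
    · -- t is a global min of g, hence local min, deriv zero
      have hloc : IsLocalMin (fun x => a / 2 * x ^ 2 - φ x - s * x) t :=
        Filter.Eventually.of_forall (fun x => ht x)
      have hd : HasDerivAt (fun x => a / 2 * x ^ 2 - φ x - s * x)
          (a * t - deriv φ t - s) t := by
        have h1 := hq_hasDerivAt φ a hdiff t
        have h2 : HasDerivAt (fun x : ℝ => s * x) s t := by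
          simpa using (hasDerivAt_id t).const_mul s
        exact h1.sub h2
      have := hloc.hasDerivAt_eq_zero hd
      linarith
  · intro t
    set s := a * t - deriv φ t with hs
    have hleast : IsLeast {y : ℝ | ∃ t' : ℝ,
        y = (1 / 2) * (Real.sqrt a * t' - s / Real.sqrt a) ^ 2 - φ t'}
        ((1 / 2) * (Real.sqrt a * t - s / Real.sqrt a) ^ 2 - φ t) := by
      constructor
      · exact ⟨t, rfl⟩
      · rintro y ⟨t', rfl⟩
        have := hq_grad_ineq φ a hdiff hconv t t'
        rw [hq_expand a ha s t, hq_expand a ha s t']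
        rw [← hs] at this
        nlinarith
    rw [hleast.csInf_eq]
    ring
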